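/- Let t ≥ 0 be a real number and let k : ℕ × ℕ → ℕ be a non-decreasing function such that k(ℓ,n) ≤ b·(ℓ·log₂² n)^t for all ℓ ≥ 1 and n ≥ 2, for some constant b > 0. Then there exists a real number c > 0 with the following property: if a finite simple graph G on n ≥ 2 vertices is fractionally k-treewidth-fragile and H is a subgraph of G with m vertices where m ≥ (log₂ n)^{4t}, then H has a balanced separator of order at most c·m^{1−1/(2t+2)}. -/

import Mathlib

open scoped Classical

universe u

/-- `C` is a balanced separator in `G`: every connected component of `G - C`
has at most `(2/3)|V(G)|` vertices. -/
def IsBalancedSeparator {V : Type u} (G : SimpleGraph V) (C : Set V) : Prop :=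
  ∀ K : (G.induce Cᶜ).ConnectedComponent, 3 * K.supp.ncard ≤ 2 * Nat.card V

/-- A model of the clique `K_m` of depth `d` in `G`. -/
structure CliqueModel {V : Type u} (G : SimpleGraph V) (m d : ℕ) where
  B : Fin m → Set V
  disj : ∀ i j : Fin m, i ≠ j → Disjoint (B i) (B j)
  conn : ∀ i, (G.induce (B i)).Connected
  rad : ∀ i, ∃ v : B i, ∀ u : B i, (G.induce (B i)).dist v u ≤ d
  adj : ∀ i j : Fin m, i < j → ∃ u ∈ B i, ∃ v ∈ B j, G.Adj u v

/-- The support of a clique model. -/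
def CliqueModel.support {V : Type u} {G : SimpleGraph V} {m d : ℕ}
    (M : CliqueModel G m d) : Set V := ⋃ i, M.B i

/-- An `m₀`-bounded model: each branch set has at most `m₀ * d` vertices. -/
def CliqueModel.Bounded {V : Type u} {G : SimpleGraph V} {m d : ℕ}
    (M : CliqueModel G m d) (m₀ : ℕ) : Prop := ∀ i, (M.B i).ncard ≤ m₀ * d

/-- `ω_d(G)`: the maximum `m` such that `G` contains a model of `K_m` of depth `d`. -/
noncomputable def omegaDepth {V : Type u} (G : SimpleGraph V) (d : ℕ) : ℕ :=
  sSup {m | Nonempty (CliqueModel G m d)}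

/-- Membership in the class `𝒢_{c,ε}`: every subgraph `H` of `G` has a
balanced separator of order at most `c * |V(H)|^(1-ε)`. -/
def MemGSep {V : Type u} (G : SimpleGraph V) (c ε : ℝ) : Prop :=
  ∀ (S : Set V) (H : SimpleGraph S), H ≤ G.induce S →
    ∃ C : Set S, IsBalancedSeparator H C ∧ (C.ncard : ℝ) ≤ c * (S.ncard : ℝ) ^ (1 - ε)

/-- A model of a graph `H` of depth `r` in `G` (witnessing that `H` is obtained from a
subgraph of `G` by contracting vertex-disjoint subgraphs of radius at most `r`). -/
structure MinorModel {V : Type u} {W : Type w} (G : SimpleGraph V) (H : SimpleGraph W)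
    (r : ℕ) where
  B : W → Set V
  disj : ∀ i j : W, i ≠ j → Disjoint (B i) (B j)
  conn : ∀ i, (G.induce (B i)).Connected
  rad : ∀ i, ∃ v : B i, ∀ u : B i, (G.induce (B i)).dist v u ≤ r
  adj : ∀ i j : W, H.Adj i j → ∃ u ∈ B i, ∃ v ∈ B j, G.Adj u v

/-- `∇_r(G)`: the maximum average degree of a graph obtained from a subgraph of `G`
by contracting vertex-disjoint subgraphs of radius at most `r`. -/
noncomputable def nabla {V : Type u} (G : SimpleGraph V) (r : ℕ) : ℝ :=
  sSup { x | ∃ (m : ℕ) (H : SimpleGraph (Fin m)), 0 < m ∧ Nonempty (MinorModel G H r) ∧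
    x = 2 * (H.edgeSet.ncard : ℝ) / m }

/-- A tree decomposition of `G`. -/
structure TreeDecomp {V : Type u} (G : SimpleGraph V) where
  ι : Type u
  T : SimpleGraph ι
  tree : T.IsTree
  bag : ι → Set V
  hedge : ∀ u v : V, G.Adj u v → ∃ z, u ∈ bag z ∧ v ∈ bag z
  hvert : ∀ v : V, (T.induce {z | v ∈ bag z}).Connected

/-- `G` has treewidth at most `k`. -/
def TreewidthLE {V : Type u} (G : SimpleGraph V) (k : ℕ) : Prop :=
  ∃ D : TreeDecomp G, ∀ z, (D.bag z).ncard ≤ k + 1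

/-- `coTW_k(G)`: sets of vertices whose removal brings the treewidth down to at most `k`. -/
def coTW {V : Type u} (G : SimpleGraph V) (k : ℕ) : Set (Set V) :=
  { X | TreewidthLE (G.induce Xᶜ) k }

/-- An `ε`-thin (finitely supported) probability distribution on a collection `𝒳`
of subsets of the vertex set. -/
structure ThinDist {V : Type u} (𝒳 : Set (Set V)) (ε : ℝ) where
  supp : Finset (Set V)
  p : Set V → ℝ
  nonneg : ∀ X, 0 ≤ p X
  mem : ∀ X ∈ supp, X ∈ 𝒳
  zero_outside : ∀ X ∉ supp, p X = 0
  total : ∑ X ∈ supp, p X = 1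
  thin : ∀ v : V, ∑ X ∈ supp, (if v ∈ X then p X else 0) ≤ ε

namespace TreeSep
variable {ι : Type u} (T : SimpleGraph ι)

def tcomp (c y : ι) : Set ι := {w | ∃ p : T.Walk y w, c ∉ p.support}

variable {T}

lemma not_mem_tcomp_self (c y : ι) : c ∉ tcomp T c y := by
  rintro ⟨p, hp⟩; exact hp p.end_mem_support

lemma mem_tcomp_self {c y : ι} (h : y ≠ c) : y ∈ tcomp T c y :=
  ⟨SimpleGraph.Walk.nil, by simp [h.symm]⟩

lemma mem_tcomp_symm {c y w : ι} (h : w ∈ tcomp T c y) : y ∈ tcomp T c w := by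
  obtain ⟨p, hp⟩ := h
  exact ⟨p.reverse, by simpa [SimpleGraph.Walk.support_reverse] using hp⟩

lemma mem_tcomp_trans {c x y w : ι} (h : w ∈ tcomp T c y) (h' : x ∈ tcomp T c w) :
    x ∈ tcomp T c y := by
  obtain ⟨p, hp⟩ := h; obtain ⟨q, hq⟩ := h'
  exact ⟨p.append q, by
    rw [SimpleGraph.Walk.mem_support_append_iff]; tauto⟩

lemma tcomp_eq_of_mem {c x y w : ι} (hx : w ∈ tcomp T c x) (hy : w ∈ tcomp T c y) :
    tcomp T c x = tcomp T c y := by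
  ext u
  constructor
  · intro hu
    exact mem_tcomp_trans hy (mem_tcomp_trans (mem_tcomp_symm hx) hu)
  · intro hu
    exact mem_tcomp_trans hx (mem_tcomp_trans (mem_tcomp_symm hy) hu)

lemma tcomp_adj_disjoint (hT : T.IsAcyclic) {z z' : ι} (h : T.Adj z z') {w : ι}
    (h1 : w ∈ tcomp T z z') (h2 : w ∈ tcomp T z' z) : False := by
  obtain ⟨p, hp⟩ := h1
  obtain ⟨q, hq⟩ := h2
  have hbr := (SimpleGraph.isAcyclic_iff_forall_adj_isBridge.mp hT h)
  rw [SimpleGraph.isBridge_iff_adj_and_forall_walk_mem_edges] at hbr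
  have hmem := hbr (q.append p.reverse)
  rw [SimpleGraph.Walk.edges_append, List.mem_append] at hmem
  rcases hmem with hmem | hmem
  · exact hq (q.snd_mem_support_of_mem_edges hmem)
  · rw [SimpleGraph.Walk.edges_reverse, List.mem_reverse] at hmem
    exact hp (p.fst_mem_support_of_mem_edges hmem)

lemma mem_tcomp_of_not (hT : T.Connected) {z z' : ι} (hzz : z ≠ z') {w : ι}
    (h2 : w ∉ tcomp T z' z) : w ∈ tcomp T z z' := by
  obtain ⟨q0⟩ := hT.preconnected z' w
  set q : T.Walk z' w := (q0.toPath : T.Path z' w).1 with hqdef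
  have hq : q.IsPath := (q0.toPath : T.Path z' w).2
  by_cases hz : z ∈ q.support
  · exfalso
    apply h2
    refine ⟨q.dropUntil z hz, fun hz' => ?_⟩
    have hspec := q.take_spec hz
    have hnodup := hq.support_nodup
    rw [← hspec, SimpleGraph.Walk.support_append, List.nodup_append] at hnodup
    have hz'tail : z' ∈ (q.dropUntil z hz).support.tail := by
      have hc := (q.dropUntil z hz).support_eq_cons
      rw [hc] at hz'
      rcases List.mem_cons.mp hz' with hz' | hz'
      · exact absurd hz'.symm hzz
      · exact hz'
    exact hnodup.2.2 _ (q.takeUntil z hz).start_mem_support _ hz'tail rfl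
  · exact ⟨q, hz⟩

end TreeSep

open TreeSep in
/-- Balanced separator from a tree decomposition: a single bag splits the `A`-weight in half. -/
lemma exists_bag_separator {W : Type u} [Finite W] (G' : SimpleGraph W) (k : ℕ)
    (h : TreewidthLE G' k) (A : Set W) :
    ∃ B : Set W, B.ncard ≤ k + 1 ∧
      ∀ K : (G'.induce Bᶜ).ConnectedComponent,
        2 * (A ∩ (Subtype.val '' K.supp)).ncard ≤ A.ncard := by
  obtain ⟨D, hD⟩ := h
  rcases A.eq_empty_or_nonempty with rfl | ⟨v₀, hv₀⟩
  · exact ⟨∅, by simp, fun K => by simp⟩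
  set ι' := D.ι
  set T := D.T with hTdef
  have hconn : T.Connected := D.tree.isConnected
  have hacyc : T.IsAcyclic := D.tree.IsAcyclic
  -- the subtree of bags containing a vertex
  set Ts : W → Set ι' := fun v => {z | v ∈ D.bag z} with hTs
  have hf : ∀ v : W, ∃ z, v ∈ D.bag z := fun v => by
    obtain ⟨⟨z, hz⟩⟩ := (D.hvert v).nonempty
    exact ⟨z, hz⟩
  choose f hfmem using hf
  -- subtree property: all of `Ts v` is in one `tcomp`
  have hsub : ∀ (v : W) (z : ι'), z ∉ Ts v → ∀ ζ ∈ Ts v, ζ ∈ tcomp T z (f v) := by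
    intro v z hz ζ hζ
    obtain ⟨q0⟩ := (D.hvert v).preconnected ⟨f v, hfmem v⟩ ⟨ζ, hζ⟩
    refine ⟨q0.map (SimpleGraph.Embedding.induce (Ts v)).toHom, fun hzs => ?_⟩
    erw [SimpleGraph.Walk.support_map] at hzs
    obtain ⟨⟨x, hx⟩, _, rfl⟩ := List.mem_map.mp hzs
    exact hz hx
  have hfin : A.Finite := A.toFinite
  set Afin : Finset W := hfin.toFinset with hAfin
  have hAcard : Afin.card = A.ncard := (Set.ncard_eq_toFinset_card _ _).symm
  set a := Afin.card with ha
  -- root and hull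
  set pv : ∀ v : W, T.Walk (f v₀) (f v) := fun v => (hconn.preconnected (f v₀) (f v)).some
    with hpv
  set Hull : Finset ι' := Afin.biUnion (fun v => (pv v).support.toFinset) with hHull
  have hHullmem : ∀ v ∈ Afin, ∀ z ∈ (pv v).support, z ∈ Hull := by
    intro v hv z hz
    exact Finset.mem_biUnion.mpr ⟨v, hv, List.mem_toFinset.mpr hz⟩
  -- weights
  set WS : Set ι' → Finset W := fun Cs => Afin.filter (fun v => Ts v ⊆ Cs) with hWS
  have hWSmono : ∀ {C1 C2 : Set ι'}, C1 ⊆ C2 → WS C1 ⊆ WS C2 := by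
    intro C1 C2 h12
    intro v hv
    simp only [hWS, Finset.mem_filter] at hv ⊢
    exact ⟨hv.1, hv.2.trans h12⟩
  set M : ι' → ℕ := fun z => sSup {q | ∃ y, q = (WS (tcomp T z y)).card} with hM
  have hMbdd : ∀ z : ι', BddAbove {q | ∃ y, q = (WS (tcomp T z y)).card} := by
    intro z
    refine ⟨a, fun q hq => ?_⟩
    obtain ⟨y, rfl⟩ := hq
    exact Finset.card_filter_le _ _
  have hMle : ∀ z y, (WS (tcomp T z y)).card ≤ M z := by
    intro z y
    exact le_csSup (hMbdd z) ⟨y, rfl⟩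
  have hMattain : ∀ z, ∃ y, (WS (tcomp T z y)).card = M z := by
    intro z
    have hne : {q | ∃ y, q = (WS (tcomp T z y)).card}.Nonempty := ⟨_, z, rfl⟩
    obtain ⟨y, hy⟩ := Nat.sSup_mem hne (hMbdd z)
    exact ⟨y, hy.symm⟩
  choose ys hys using hMattain
  have hv₀A : v₀ ∈ Afin := hfin.mem_toFinset.mpr hv₀
  -- the key claim
  have key : ∃ z ∈ Hull, 2 * M z ≤ a := by
    by_contra hcon
    push_neg at hcon
    set φ : ι' → ℕ := fun z => (Hull.card + 1) * M z + (Hull.filter (· ∈ tcomp T z (ys z))).card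
      with hφ
    have hrH : f v₀ ∈ Hull := hHullmem v₀ hv₀A _ (pv v₀).start_mem_support
    obtain ⟨z, hzH, hzmin⟩ := Hull.exists_min_image φ ⟨_, hrH⟩
    set Kz : Set ι' := tcomp T z (ys z) with hKz
    have hKcard : (WS Kz).card = M z := hys z
    have haM : a < 2 * M z := hcon z hzH
    have ha1 : 1 ≤ a := Finset.card_pos.mpr ⟨v₀, hv₀A⟩
    have hM1 : 0 < M z := by omega
    obtain ⟨v, hv⟩ : (WS Kz).Nonempty := Finset.card_pos.mp (by omega)
    rw [hWS, Finset.mem_filter] at hv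
    have hfvK : f v ∈ Kz := hv.2 (hfmem v)
    have hzK : z ∉ Kz := not_mem_tcomp_self _ _
    have hzfv : z ≠ f v := fun h => hzK (h ▸ hfvK)
    -- get a neighbour z' of z inside Kz ∩ Hull
    obtain ⟨w, hwA, hzw⟩ := Finset.mem_biUnion.mp hzH
    have hzw' : z ∈ (pv w).support := List.mem_toFinset.mp hzw
    set q0 : T.Walk z (f v) := ((pv w).takeUntil z hzw').reverse.append (pv v) with hq0
    have hq0sup : ∀ x ∈ q0.support, x ∈ Hull := by
      intro x hx
      rw [hq0, SimpleGraph.Walk.mem_support_append_iff] at hx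
      rcases hx with hx | hx
      · rw [SimpleGraph.Walk.support_reverse, List.mem_reverse] at hx
        exact hHullmem w hwA _ (SimpleGraph.Walk.support_takeUntil_subset _ _ hx)
      · exact hHullmem v hv.1 _ hx
    set q : T.Walk z (f v) := (q0.toPath : T.Path z (f v)).1 with hqdef
    have hqP : q.IsPath := (q0.toPath : T.Path z (f v)).2
    have hqsub : ∀ x ∈ q.support, x ∈ Hull := fun x hx =>
      hq0sup x (q0.support_toPath_subset hx)
    obtain ⟨z', hadj, tail, hqeq⟩ := SimpleGraph.Walk.exists_eq_cons_of_ne hzfv q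
    have hztail : z ∉ tail.support := by
      rw [hqeq, SimpleGraph.Walk.cons_isPath_iff] at hqP
      exact hqP.2
    have hfv' : f v ∈ tcomp T z z' := ⟨tail, hztail⟩
    have hKz' : Kz = tcomp T z z' := tcomp_eq_of_mem hfvK hfv'
    have hzz' : z ≠ z' := hadj.ne
    have hz'K : z' ∈ Kz := by rw [hKz']; exact mem_tcomp_self hadj.ne'
    have hz'H : z' ∈ Hull := by
      apply hqsub
      rw [hqeq, SimpleGraph.Walk.support_cons]
      exact List.mem_cons.mpr (Or.inr tail.start_mem_support)
    -- bounds on the components of z'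
    have hbound1 : ∀ y', z ∈ tcomp T z' y' → (WS (tcomp T z' y')).card + M z ≤ a := by
      intro y' hzin
      have hdisj : Disjoint (WS (tcomp T z' y')) (WS Kz) := by
        rw [Finset.disjoint_left]
        intro u hu1 hu2
        rw [hWS, Finset.mem_filter] at hu1 hu2
        have heq2 : tcomp T z' y' = tcomp T z' z :=
          tcomp_eq_of_mem hzin (mem_tcomp_self hzz')
        rw [heq2] at hu1
        exact tcomp_adj_disjoint hacyc hadj (hKz' ▸ hu2.2 (hfmem u)) (hu1.2 (hfmem u))
      have hsubA : WS (tcomp T z' y') ∪ WS Kz ⊆ Afin := by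
        intro u hu
        rcases Finset.mem_union.mp hu with hu | hu <;>
          exact Finset.mem_of_mem_filter _ (by rw [hWS] at hu; exact hu)
      calc (WS (tcomp T z' y')).card + M z
          = (WS (tcomp T z' y') ∪ WS Kz).card := by
            rw [Finset.card_union_of_disjoint hdisj, hKcard]
        _ ≤ a := Finset.card_le_card hsubA
    have hbound2 : ∀ y', z ∉ tcomp T z' y' → tcomp T z' y' ⊆ Kz \ {z'} := by
      intro y' hznot x hx
      have hxz' : x ≠ z' := fun h => not_mem_tcomp_self z' y' (h ▸ hx)
      have hxz : x ∉ tcomp T z' z := fun h =>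
        hznot ((tcomp_eq_of_mem hx h) ▸ mem_tcomp_self hzz')
      refine ⟨?_, hxz'⟩
      rw [hKz']
      exact mem_tcomp_of_not hconn hzz' hxz
    have hMz'le : M z' ≤ M z := by
      have hne2 : {q | ∃ y, q = (WS (tcomp T z' y)).card}.Nonempty := ⟨_, z', rfl⟩
      have hub : ∀ b ∈ {q | ∃ y, q = (WS (tcomp T z' y)).card}, b ≤ M z := by
        rintro q ⟨y', rfl⟩
        by_cases hzin : z ∈ tcomp T z' y'
        · have := hbound1 y' hzin; omega
        · have := hWSmono ((hbound2 y' hzin).trans Set.diff_subset)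
          exact (Finset.card_le_card this).trans hKcard.le
      exact csSup_le hne2 hub
    have haM' : a < 2 * M z' := hcon z' hz'H
    have hK'card : (WS (tcomp T z' (ys z'))).card = M z' := hys z'
    have hznotin : z ∉ tcomp T z' (ys z') := by
      intro hzin
      have := hbound1 (ys z') hzin
      omega
    have hsubKz : tcomp T z' (ys z') ⊆ Kz \ {z'} := hbound2 (ys z') hznotin
    -- φ decreases
    have hφz' : φ z' = (Hull.card + 1) * M z' + (Hull.filter (· ∈ tcomp T z' (ys z'))).card := by
      rw [hφ]
    have hφz : φ z = (Hull.card + 1) * M z + (Hull.filter (· ∈ tcomp T z (ys z))).card := by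
      rw [hφ]
    have hφlt : φ z' < φ z := by
      rcases lt_or_eq_of_le hMz'le with hlt | heqM
      · have h1 : (Hull.filter (· ∈ tcomp T z' (ys z'))).card ≤ Hull.card :=
          Finset.card_filter_le _ _
        have hms : (Hull.card + 1) * (M z' + 1) = (Hull.card + 1) * M z' + (Hull.card + 1) :=
          Nat.mul_succ _ _
        have hmle : (Hull.card + 1) * (M z' + 1) ≤ (Hull.card + 1) * M z :=
          Nat.mul_le_mul_left _ (by omega)
        omega
      · have hz'mem : z' ∈ Hull.filter (· ∈ tcomp T z (ys z)) :=
          Finset.mem_filter.mpr ⟨hz'H, hz'K⟩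
        have hsubf : Hull.filter (· ∈ tcomp T z' (ys z')) ⊆
            (Hull.filter (· ∈ tcomp T z (ys z))).erase z' := by
          intro x hx
          rw [Finset.mem_filter] at hx
          obtain ⟨hxK, hxne⟩ := hsubKz hx.2
          exact Finset.mem_erase.mpr ⟨hxne, Finset.mem_filter.mpr ⟨hx.1, hxK⟩⟩
        have hcard : (Hull.filter (· ∈ tcomp T z' (ys z'))).card <
            (Hull.filter (· ∈ tcomp T z (ys z))).card :=
          lt_of_le_of_lt (Finset.card_le_card hsubf) (Finset.card_erase_lt_of_mem hz'mem)
        rw [heqM] at hφz'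
        omega
    exact absurd (hzmin z' hz'H) (by omega)
  -- conclude
  obtain ⟨z, hzH, hz2M⟩ := key
  refine ⟨D.bag z, hD z, ?_⟩
  intro K
  rcases (A ∩ (Subtype.val '' K.supp)).eq_empty_or_nonempty with he | hne
  · rw [he]; simp
  · obtain ⟨u₀, hu₀A, u₀s, hu₀sup, rfl⟩ := hne
    have hcls : ∀ (w₁ w₂ : ↥(D.bag z)ᶜ), (G'.induce (D.bag z)ᶜ).Reachable w₁ w₂ →
        tcomp T z (f ↑w₁) = tcomp T z (f ↑w₂) := by
      intro w₁ w₂ hr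
      obtain ⟨p⟩ := hr
      induction p with
      | nil => rfl
      | @cons x y _ hxy p ih =>
        refine Eq.trans ?_ ih
        obtain ⟨ζ, hζ1, hζ2⟩ := D.hedge ↑x ↑y hxy
        have t1 : ζ ∈ tcomp T z (f ↑x) := hsub ↑x z x.2 ζ hζ1
        have t2 : ζ ∈ tcomp T z (f ↑y) := hsub ↑y z y.2 ζ hζ2
        exact tcomp_eq_of_mem t1 t2
    have hsubset : A ∩ (Subtype.val '' K.supp) ⊆ ↑(WS (tcomp T z (f ↑u₀s))) := by
      rintro u ⟨huA, us, hus, rfl⟩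
      have hreach : (G'.induce (D.bag z)ᶜ).Reachable us u₀s := by
        rw [SimpleGraph.ConnectedComponent.mem_supp_iff] at hus hu₀sup
        exact SimpleGraph.ConnectedComponent.exact (hus.trans hu₀sup.symm)
      rw [Finset.mem_coe, hWS, Finset.mem_filter]
      refine ⟨hfin.mem_toFinset.mpr huA, ?_⟩
      have h1 : Ts ↑us ⊆ tcomp T z (f ↑us) := fun ζ hζ => hsub ↑us z us.2 ζ hζ
      rwa [hcls us u₀s hreach] at h1
    have h2 : (A ∩ (Subtype.val '' K.supp)).ncard ≤ (WS (tcomp T z (f ↑u₀s))).card := by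
      have h2' := Set.ncard_le_ncard hsubset (Finset.finite_toSet _)
      rwa [Set.ncard_coe_finset] at h2'
    have h3 := hMle z (f ↑u₀s)
    omega

lemma averaging {V : Type u} [Fintype V] {𝒳 : Set (Set V)} {ε : ℝ}
    (TD : ThinDist 𝒳 ε) (S : Set V) :
    ∃ X ∈ TD.supp, ((X ∩ S).ncard : ℝ) ≤ S.ncard * ε := by
  have hcard : ∀ X : Set V, ((X ∩ S).ncard : ℝ) =
      ∑ v ∈ S.toFinset, (if v ∈ X then (1:ℝ) else 0) := by
    intro X
    have h1 : X ∩ S = ↑(S.toFinset.filter (fun v => v ∈ X)) := by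
      ext v
      simp only [Set.mem_inter_iff, Finset.coe_filter, Set.mem_toFinset, Set.mem_setOf_eq]
      tauto
    rw [h1, Set.ncard_coe_finset, Finset.card_filter]
    push_cast
    rfl
  have hkey : ∑ X ∈ TD.supp, TD.p X * ((X ∩ S).ncard : ℝ) ≤ S.ncard * ε := by
    calc ∑ X ∈ TD.supp, TD.p X * ((X ∩ S).ncard : ℝ)
        = ∑ X ∈ TD.supp, ∑ v ∈ S.toFinset, (if v ∈ X then TD.p X else 0) := by
          apply Finset.sum_congr rfl
          intro X _
          rw [hcard X, Finset.mul_sum]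
          apply Finset.sum_congr rfl
          intro v _
          split <;> simp
      _ = ∑ v ∈ S.toFinset, ∑ X ∈ TD.supp, (if v ∈ X then TD.p X else 0) :=
          Finset.sum_comm
      _ ≤ ∑ _v ∈ S.toFinset, ε := Finset.sum_le_sum (fun v _ => TD.thin v)
      _ = S.ncard * ε := by
          rw [Finset.sum_const, nsmul_eq_mul, Set.ncard_eq_toFinset_card']
  by_contra hcon
  push_neg at hcon
  obtain ⟨X₀, hX₀⟩ : ∃ X₀ ∈ TD.supp, 0 < TD.p X₀ := by
    by_contra hz
    push_neg at hz
    have : ∑ X ∈ TD.supp, TD.p X = 0 := Finset.sum_eq_zero (fun X hX =>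
      le_antisymm (hz X hX) (TD.nonneg X))
    rw [TD.total] at this
    norm_num at this
  have hlt : ∑ X ∈ TD.supp, TD.p X * ((S.ncard : ℝ) * ε) <
      ∑ X ∈ TD.supp, TD.p X * ((X ∩ S).ncard : ℝ) := by
    apply Finset.sum_lt_sum
    · intro X hX
      exact mul_le_mul_of_nonneg_left (hcon X hX).le (TD.nonneg X)
    · exact ⟨X₀, hX₀.1, by
        exact mul_lt_mul_of_pos_left (hcon X₀ hX₀.1) hX₀.2⟩
  rw [← Finset.sum_mul, TD.total, one_mul] at hlt
  exact absurd hkey (by linarith)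


/-- Lemma 8: fractional `k`-treewidth-fragility with
`k(ℓ,n) ≤ b(ℓ log² n)^t` yields balanced separators of order `O(m^{1-1/(2t+2)})` in all
subgraphs with `m ≥ (log n)^{4t}` vertices. -/
theorem stmt12 (t b : ℝ) (ht : 0 ≤ t) (hb : 0 < b) (k : ℕ → ℕ → ℕ)
    (hmono : ∀ ℓ ℓ' n n' : ℕ, ℓ ≤ ℓ' → n ≤ n' → k ℓ n ≤ k ℓ' n')
    (hk : ∀ ℓ n : ℕ, 1 ≤ ℓ → 2 ≤ n →
      (k ℓ n : ℝ) ≤ b * ((ℓ : ℝ) * (Real.logb 2 n) ^ 2) ^ t) :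
    ∃ c : ℝ, 0 < c ∧
      ∀ (V : Type) [Fintype V] (G : SimpleGraph V) (n : ℕ),
        Fintype.card V = n → 2 ≤ n →
        (∀ ℓ : ℕ, 1 ≤ ℓ → ℓ ≤ n →
          Nonempty (ThinDist (coTW G (k ℓ n)) ((ℓ : ℝ)⁻¹))) →
        ∀ (S : Set V) (H : SimpleGraph S) (m : ℕ),
          H ≤ G.induce S → S.ncard = m → (Real.logb 2 n) ^ (4 * t) ≤ (m : ℝ) →
          ∃ C : Set S, IsBalancedSeparator H C ∧
            (C.ncard : ℝ) ≤ c * (m : ℝ) ^ (1 - 1 / (2 * t + 2)) := by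
  classical
  have h2t2 : (0:ℝ) < 2 * t + 2 := by linarith
  refine ⟨b * 2 ^ t + 2, by positivity, ?_⟩
  intro V _ G n hcard hn2 hthin S H m hHG hm hmlog
  have hL1 : (1:ℝ) ≤ Real.logb 2 n := by
    calc (1:ℝ) = Real.logb 2 2 := (Real.logb_self_eq_one (by norm_num)).symm
      _ ≤ Real.logb 2 n := by
          apply Real.logb_le_logb_of_le (by norm_num) (by norm_num)
          exact_mod_cast hn2
  have hm1R : (1:ℝ) ≤ (m:ℝ) :=
    le_trans (Real.one_le_rpow hL1 (by positivity)) hmlog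
  have hm0 : (0:ℝ) < (m:ℝ) := by linarith
  have hs0 : (0:ℝ) ≤ 1 / (2*t+2) := by positivity
  have hs1 : 1 / (2*t+2) ≤ 1 := by
    rw [div_le_one h2t2]; linarith
  have hmsge1 : (1:ℝ) ≤ (m:ℝ) ^ (1/(2*t+2)) := Real.one_le_rpow hm1R hs0
  set ℓ : ℕ := ⌈(m:ℝ) ^ (1/(2*t+2))⌉₊ with hℓ
  have hℓ1 : 1 ≤ ℓ := Nat.ceil_pos.mpr (by linarith)
  have hℓlow : (m:ℝ) ^ (1/(2*t+2)) ≤ (ℓ:ℝ) := Nat.le_ceil _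
  have hℓup : (ℓ:ℝ) ≤ 2 * (m:ℝ) ^ (1/(2*t+2)) := by
    have h1 := Nat.ceil_lt_add_one (show (0:ℝ) ≤ (m:ℝ) ^ (1/(2*t+2)) by positivity)
    rw [hℓ]
    linarith
  have hmn : m ≤ n := by
    rw [← hm, ← hcard]
    calc S.ncard ≤ (Set.univ : Set V).ncard := Set.ncard_le_ncard (Set.subset_univ S)
      _ = Fintype.card V := by rw [Set.ncard_univ, Nat.card_eq_fintype_card]
  have hℓn : ℓ ≤ n := by
    have h1 : (m:ℝ)^(1/(2*t+2)) ≤ ((m:ℕ):ℝ) := by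
      calc (m:ℝ)^(1/(2*t+2)) ≤ (m:ℝ)^(1:ℝ) := Real.rpow_le_rpow_of_exponent_le hm1R hs1
        _ = (m:ℝ) := Real.rpow_one _
    have h2 : ℓ ≤ m := by rw [hℓ]; exact Nat.ceil_le.mpr h1
    exact le_trans h2 hmn
  obtain ⟨TD⟩ := hthin ℓ hℓ1 hℓn
  obtain ⟨X, hXsupp, hXle⟩ := averaging TD S
  rw [hm] at hXle
  have hXtw : TreewidthLE (G.induce Xᶜ) (k ℓ n) := TD.mem X hXsupp
  set A : Set ↥Xᶜ := {w : ↥Xᶜ | ↑w ∈ S} with hA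
  obtain ⟨B, hBcard, hBsep⟩ := exists_bag_separator (G.induce Xᶜ) (k ℓ n) hXtw A
  set C : Set ↥S := {v : ↥S | (v:V) ∈ X ∨ (v:V) ∈ Subtype.val '' B} with hC
  have hAm : A.ncard ≤ m := by
    rw [← hm, ← Set.ncard_image_of_injective A Subtype.val_injective]
    exact Set.ncard_le_ncard (by rintro v ⟨w, hw, rfl⟩; exact hw) S.toFinite
  have hw1 : ∀ w : ↥Cᶜ, (w.1.1 : V) ∈ Xᶜ := by
    intro w hX
    exact w.2 (Or.inl hX)
  have hw2 : ∀ w : ↥Cᶜ, (⟨w.1.1, hw1 w⟩ : ↥Xᶜ) ∈ Bᶜ := by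
    intro w hB
    exact w.2 (Or.inr ⟨_, hB, rfl⟩)
  refine ⟨C, ?_, ?_⟩
  · -- balanced separator
    intro K'
    have hNat : Nat.card ↥S = m := by rw [Nat.card_coe_set_eq, hm]
    rw [hNat]
    set Φ : (H.induce Cᶜ) →g ((G.induce Xᶜ).induce Bᶜ) :=
      ⟨fun w => ⟨⟨w.1.1, hw1 w⟩, hw2 w⟩, fun {w₁ w₂} h => hHG h⟩ with hΦ
    obtain ⟨w₀, hw₀⟩ := K'.exists_rep
    set K : ((G.induce Xᶜ).induce Bᶜ).ConnectedComponent :=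
      SimpleGraph.connectedComponentMk _ (Φ w₀) with hK
    have hmapsupp : ∀ w ∈ K'.supp, Φ w ∈ K.supp := by
      intro w hw
      rw [SimpleGraph.ConnectedComponent.mem_supp_iff] at hw ⊢
      rw [← hw₀] at hw
      have hr : (H.induce Cᶜ).Reachable w w₀ := SimpleGraph.ConnectedComponent.exact hw
      exact SimpleGraph.ConnectedComponent.sound (hr.map Φ)
    have himg : (fun w : ↥Cᶜ => (w.1.1 : V)) '' K'.supp ⊆
        Subtype.val '' (A ∩ Subtype.val '' K.supp) := by
      rintro v ⟨w, hw, rfl⟩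
      exact ⟨⟨w.1.1, hw1 w⟩, ⟨w.1.2, ⟨Φ w, hmapsupp w hw, rfl⟩⟩, rfl⟩
    have hKcard : K'.supp.ncard = ((fun w : ↥Cᶜ => (w.1.1 : V)) '' K'.supp).ncard :=
      (Set.ncard_image_of_injective _ (fun a b hab => Subtype.ext (Subtype.ext hab))).symm
    have h1 : K'.supp.ncard ≤ (A ∩ Subtype.val '' K.supp).ncard := by
      rw [hKcard, ← Set.ncard_image_of_injective (A ∩ Subtype.val '' K.supp)
        Subtype.val_injective]
      exact Set.ncard_le_ncard himg ((Set.toFinite _).image _)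
    have h2 := hBsep K
    omega
  · -- cardinality bound
    have hsub : Subtype.val '' C ⊆ (X ∩ S) ∪ Subtype.val '' B := by
      rintro v ⟨vs, hvs, rfl⟩
      rcases hvs with h | h
      · exact Or.inl ⟨h, vs.2⟩
      · exact Or.inr h
    have hCle : C.ncard ≤ (X ∩ S).ncard + B.ncard := by
      rw [← Set.ncard_image_of_injective C Subtype.val_injective]
      refine le_trans (Set.ncard_le_ncard hsub (by
        exact ((S.toFinite.inter_of_right X).union ((Set.toFinite B).image _)))) ?_
      refine le_trans (Set.ncard_union_le _ _) ?_
      rw [Set.ncard_image_of_injective B Subtype.val_injective]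
    have he0 : (0:ℝ) ≤ 1 - 1/(2*t+2) := by linarith
    have hme1 : (1:ℝ) ≤ (m:ℝ) ^ (1 - 1/(2*t+2)) := Real.one_le_rpow hm1R he0
    have hℓpos : (0:ℝ) < (ℓ:ℝ) := by
      have : (0:ℕ) < ℓ := hℓ1
      exact_mod_cast this
    have hfrac : ((X ∩ S).ncard : ℝ) ≤ (m:ℝ) ^ (1 - 1/(2*t+2)) := by
      have hd : (m:ℝ) * (ℓ:ℝ)⁻¹ ≤ (m:ℝ) / (m:ℝ)^(1/(2*t+2)) := by
        rw [← div_eq_mul_inv]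
        exact div_le_div_of_nonneg_left (by linarith) (by linarith) hℓlow
      have hpow : (m:ℝ) / (m:ℝ)^(1/(2*t+2)) = (m:ℝ)^(1 - 1/(2*t+2)) := by
        rw [Real.rpow_sub hm0, Real.rpow_one]
      linarith
    have hkb : (k ℓ n : ℝ) ≤ b * 2 ^ t * (m:ℝ)^(1 - 1/(2*t+2)) := by
      have hk0 := hk ℓ n hℓ1 hn2
      rcases eq_or_lt_of_le ht with heq | htpos
      · -- t = 0
        rw [← heq] at hk0 ⊢
        rw [Real.rpow_zero, mul_one] at hk0
        have h20 : (2:ℝ) ^ (0:ℝ) = 1 := Real.rpow_zero 2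
        rw [h20]
        have : (1:ℝ) ≤ (m:ℝ) ^ (1 - 1/(2*(0:ℝ)+2)) := Real.one_le_rpow hm1R (by norm_num)
        nlinarith
      · -- t > 0
        set L : ℝ := Real.logb 2 n with hLdef
        have hL0 : (0:ℝ) ≤ L := by linarith
        have h2t : (0:ℝ) < 2*t := by linarith
        have hL2 : L^(2:ℕ) = (L^(4*t))^(1/(2*t)) := by
          rw [← Real.rpow_natCast L 2, ← Real.rpow_mul hL0]
          congr 1
          field_simp
          ring
        have hLm : L^(2:ℕ) ≤ (m:ℝ)^(1/(2*t)) := by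
          rw [hL2]
          exact Real.rpow_le_rpow (by positivity) hmlog (by positivity)
        have hstep : (ℓ:ℝ) * L^2 ≤ 2 * (m:ℝ)^(1/(2*t+2) + 1/(2*t)) := by
          rw [Real.rpow_add hm0]
          calc (ℓ:ℝ) * L^2 ≤ (2 * (m:ℝ)^(1/(2*t+2))) * ((m:ℝ)^(1/(2*t))) := by
                apply mul_le_mul hℓup hLm (by positivity) (by positivity)
            _ = 2 * ((m:ℝ)^(1/(2*t+2)) * (m:ℝ)^(1/(2*t))) := by ring
        have hmono2 : ((ℓ:ℝ) * L^2)^t ≤ (2 * (m:ℝ)^(1/(2*t+2) + 1/(2*t)))^t :=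
          Real.rpow_le_rpow (by positivity) hstep ht
        have hrhs : (2 * (m:ℝ)^(1/(2*t+2) + 1/(2*t)))^t
            = 2^t * (m:ℝ)^(1 - 1/(2*t+2)) := by
          rw [Real.mul_rpow (by norm_num) (by positivity), ← Real.rpow_mul hm0.le]
          have hexp : (1/(2*t+2) + 1/(2*t)) * t = 1 - 1/(2*t+2) := by
            field_simp
            ring
          rw [hexp]
        calc (k ℓ n:ℝ) ≤ b * ((ℓ:ℝ)*L^2)^t := hk0
          _ ≤ b * (2^t * (m:ℝ)^(1 - 1/(2*t+2))) := by
              apply mul_le_mul_of_nonneg_left (hmono2.trans_eq hrhs) hb.le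
          _ = b * 2^t * (m:ℝ)^(1 - 1/(2*t+2)) := by ring
    have hB' : (B.ncard:ℝ) ≤ (k ℓ n:ℝ) + 1 := by exact_mod_cast hBcard
    have hCle' : (C.ncard:ℝ) ≤ ((X ∩ S).ncard:ℝ) + (B.ncard:ℝ) := by exact_mod_cast hCle
    have h2t0 : (0:ℝ) ≤ b * 2 ^ t := by positivity
    linarith
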